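/- Let $s \in S$ and suppose $v,w \in W$ have a meet $v \wedge w$ under the Bruhat order. Then $\phi_s(v)$ and $\phi_s(w)$ have a meet under the Bruhat order, and it equals $\phi_s(v \wedge w)$. -/

import Mathlib

namespace PaperStmt

open scoped Classical

variable {B : Type*} {W : Type*} [Group W] {M : CoxeterMatrix B}

/-- Bruhat (strong) cover: `v = t * u` for a reflection `t`, with `ℓ v = ℓ u + 1`. -/
def BruhatCov (cs : CoxeterSystem M W) (u v : W) : Prop :=
  cs.length v = cs.length u + 1 ∧ ∃ t : W, cs.IsReflection t ∧ v = t * u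

/-- The Bruhat (strong) order, generated by the covering relations. -/
def BruhatLe (cs : CoxeterSystem M W) : W → W → Prop :=
  Relation.ReflTransGen (BruhatCov cs)

/-- Strict Bruhat order. -/
def BruhatLt (cs : CoxeterSystem M W) (u v : W) : Prop :=
  BruhatLe cs u v ∧ u ≠ v

/-- Left weak order: `u ≤_L v` iff `ℓ(v u⁻¹) + ℓ u = ℓ v`. -/
def leftLe (cs : CoxeterSystem M W) (u v : W) : Prop :=
  cs.length (v * u⁻¹) + cs.length u = cs.length v

/-- Right weak order: `u ≤_R v` iff `ℓ u + ℓ(u⁻¹ v) = ℓ v`. -/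
def rightLe (cs : CoxeterSystem M W) (u v : W) : Prop :=
  cs.length u + cs.length (u⁻¹ * v) = cs.length v

/-- Demazure action of a simple reflection: `φ_s(x) = s x` if `s x > x`, else `x`. -/
noncomputable def phi (cs : CoxeterSystem M W) (i : B) (x : W) : W :=
  if BruhatLt cs x (cs.simple i * x) then cs.simple i * x else x

/-- Anti-Demazure action: `ψ_s(x) = s x` if `s x < x`, else `x`. -/
noncomputable def psi (cs : CoxeterSystem M W) (i : B) (x : W) : W :=
  if BruhatLt cs (cs.simple i * x) x then cs.simple i * x else x

/-- Right anti-Demazure action: `ψ^R_s(x) = x s` if `x s < x`, else `x`. -/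
noncomputable def psiR (cs : CoxeterSystem M W) (i : B) (x : W) : W :=
  if BruhatLt cs (x * cs.simple i) x then x * cs.simple i else x

/-- `φ_w` along a word `w = s_1 ⋯ s_n`: `φ_{s_1} ∘ ⋯ ∘ φ_{s_n}`. -/
noncomputable def phiWord (cs : CoxeterSystem M W) (ω : List B) (x : W) : W :=
  ω.foldr (phi cs) x

/-- `ψ_w` along a word `w = s_1 ⋯ s_n`: `ψ_{s_1} ∘ ⋯ ∘ ψ_{s_n}`. -/
noncomputable def psiWord (cs : CoxeterSystem M W) (ω : List B) (x : W) : W :=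
  ω.foldr (psi cs) x

/-- `ψ^R_w` along a word `w = s_1 ⋯ s_n`: `ψ^R_{s_n} ∘ ⋯ ∘ ψ^R_{s_1}`. -/
noncomputable def psiRWord (cs : CoxeterSystem M W) (ω : List B) (x : W) : W :=
  ω.foldl (fun y i => psiR cs i y) x


section Dev

open List CoxeterSystem

variable (cs : CoxeterSystem M W)

local prefix:100 "s" => cs.simple
local prefix:100 "π" => cs.wordProd
local prefix:100 "ℓ" => cs.length
local prefix:100 "ris" => cs.rightInvSeq
local prefix:100 "lis" => cs.leftInvSeq

theorem ris_cons (i : B) (ω : List B) :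
    ris (i :: ω) = ((π ω)⁻¹ * (s i) * (π ω)) :: ris ω := rfl

theorem ris_append (ω₁ ω₂ : List B) :
    ris (ω₁ ++ ω₂) = (ris ω₁).map (fun x => (π ω₂)⁻¹ * x * (π ω₂)) ++ ris ω₂ := by
  induction ω₁ with
  | nil => simp
  | cons i ω₁ ih =>
      rw [cons_append, ris_cons, ris_cons, ih, map_cons, cons_append]
      congr 1
      rw [cs.wordProd_append]
      group

theorem lis_eq_map_ris (ω : List B) :
    lis ω = (ris ω).map (fun x => (π ω) * x * (π ω)⁻¹) := by
  induction ω with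
  | nil => simp
  | cons i ω ih =>
      rw [leftInvSeq, ris_cons, map_cons, ih, map_map]
      congr 1
      · rw [cs.wordProd_cons]; group
      · apply List.map_congr_left
        intro x _
        simp only [Function.comp_apply, MulAut.conj_apply, cs.wordProd_cons]
        group

theorem simple_conj_pow (i j : B) (c : ℕ) :
    (s j) * ((s i) * (s j)) ^ c = (((s i) * (s j)) ^ c)⁻¹ * (s j) := by
  induction c with
  | zero => simp
  | succ c ih =>
      have hyx : (s j) * ((s i) * (s j)) = ((s i) * (s j))⁻¹ * (s j) := by
        rw [mul_inv_rev, cs.inv_simple, cs.inv_simple, mul_assoc]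
      rw [pow_succ', ← mul_assoc, hyx, mul_assoc, ih, ← mul_assoc, ← mul_inv_rev,
        ← pow_succ, ← pow_succ']

theorem v_alt (i j : B) (a : ℕ) :
    (π (alternatingWord i j a))⁻¹ * π (alternatingWord i j (a + 1))
      = (s j) * ((s i) * (s j)) ^ a := by
  rcases Nat.even_or_odd a with ⟨c, rfl⟩ | ⟨c, rfl⟩
  · have h1 : Even (c + c) := ⟨c, rfl⟩
    have h2 : ¬ Even (c + c + 1) := by simp [Nat.even_add_one, h1]
    rw [cs.prod_alternatingWord_eq_mul_pow, cs.prod_alternatingWord_eq_mul_pow,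
      if_pos h1, if_neg h2]
    have hd1 : (c + c) / 2 = c := by omega
    have hd2 : (c + c + 1) / 2 = c := by omega
    rw [hd1, hd2]
    simp only [one_mul]
    rw [simple_conj_pow cs i j c, simple_conj_pow cs i j (c + c), ← mul_assoc, ← mul_inv_rev,
      ← pow_add]
  · have h1 : ¬ Even (2 * c + 1) := by simp [Nat.even_add_one]
    have h2 : Even (2 * c + 1 + 1) := by simp [Nat.even_add_one, h1]
    rw [cs.prod_alternatingWord_eq_mul_pow, cs.prod_alternatingWord_eq_mul_pow,
      if_neg h1, if_pos h2]
    have hd1 : (2 * c + 1) / 2 = c := by omega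
    have hd2 : (2 * c + 1 + 1) / 2 = c + 1 := by omega
    rw [hd1, hd2]
    simp only [one_mul]
    have harith : c + 1 + c = 2 * c + 1 := by omega
    rw [simple_conj_pow cs i j (2 * c + 1), mul_inv_rev, cs.inv_simple, mul_assoc,
      simple_conj_pow cs i j (c + 1), ← mul_assoc, ← mul_inv_rev, ← pow_add, harith]

theorem ris_alt (i j : B) (n : ℕ) :
    ris (alternatingWord i j (n + 1))
      = ((s j) * ((s i) * (s j)) ^ n) :: ris (alternatingWord i j n) := by
  rw [alternatingWord_succ' i j n, ris_cons]
  congr 1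
  rw [← v_alt cs i j n, alternatingWord_succ' i j n, cs.wordProd_cons]
  group

theorem count_ris_alt (i j : B) (m : ℕ) (hm : ((s i) * (s j)) ^ m = 1) (t : W) :
    ∀ n, ((ris (alternatingWord i j (n + m))).count t)
      = ((ris (alternatingWord i j n)).count t) + ((ris (alternatingWord i j m)).count t) := by
  intro n
  induction n with
  | zero =>
      rw [Nat.zero_add, show alternatingWord i j 0 = [] from rfl]
      simp
  | succ n ih =>
      have : n + 1 + m = (n + m) + 1 := by omega
      rw [this, ris_alt, ris_alt, List.count_cons, List.count_cons, ih]
      have he : (s j) * ((s i) * (s j)) ^ (n + m) = (s j) * ((s i) * (s j)) ^ n := by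
        rw [pow_add, hm, mul_one]
      rw [he]
      ring


/-- The parity permutation representation generator. -/
noncomputable def dem (i : B) : Function.End (W × ZMod 2) :=
  fun p => ((s i) * p.1 * (s i), p.2 + if p.1 = (s i) then 1 else 0)

theorem dem_prod (ω : List B) (t : W) (ε : ZMod 2) :
    (List.prod (ω.map (dem cs)) : Function.End (W × ZMod 2)) (t, ε)
      = ((π ω) * t * (π ω)⁻¹, ε + ((ris ω).count t : ZMod 2)) := by
  induction ω generalizing ε with
  | nil => simp [Function.End]; rfl
  | cons i ω ih =>
      have hmul : ∀ (f g : Function.End (W × ZMod 2)) (p : W × ZMod 2), (f * g) p = f (g p) :=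
        fun _ _ _ => rfl
      rw [List.map_cons, List.prod_cons, hmul, ih, ris_cons, List.count_cons]
      simp only [beq_iff_eq, dem]
      have hcond : ((π ω) * t * (π ω)⁻¹ = (s i)) ↔ ((π ω)⁻¹ * (s i) * (π ω) = t) := by
        constructor
        · intro h; rw [← h]; group
        · intro h; rw [← h]; group
      rw [Prod.mk.injEq]
      constructor
      · rw [cs.wordProd_cons, mul_inv_rev, cs.inv_simple]
        group
      · rw [Nat.cast_add, apply_ite (fun n : ℕ => ((n : ZMod 2))), Nat.cast_one, Nat.cast_zero,
          if_congr hcond.symm rfl rfl]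
        ring

theorem dem_pow (i j : B) (m : ℕ) :
    ((dem cs i : Function.End (W × ZMod 2)) * dem cs j) ^ m
      = List.prod ((alternatingWord i j (2 * m)).map (dem cs)) := by
  induction m with
  | zero => rw [show alternatingWord i j (2 * 0) = [] from rfl]; simp
  | succ m ih =>
      have h2 : 2 * (m + 1) = (2 * m + 1) + 1 := by omega
      rw [h2, alternatingWord_succ' i j (2 * m + 1), alternatingWord_succ' i j (2 * m)]
      have he1 : ¬ Even (2 * m + 1) := by simp [Nat.even_add_one]
      have he2 : Even (2 * m) := ⟨m, by omega⟩
      rw [if_neg he1, if_pos he2, List.map_cons, List.map_cons, List.prod_cons, List.prod_cons,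
        ← ih, pow_succ', mul_assoc]

theorem dem_liftable : M.IsLiftable (dem cs (W := W)) := by
  intro i j
  rw [dem_pow]
  have hprod : π (alternatingWord i j (2 * M i j)) = 1 := by
    rw [cs.prod_alternatingWord_eq_mul_pow, if_pos ⟨M i j, by omega⟩, one_mul,
      show 2 * M i j / 2 = M i j by omega, cs.simple_mul_simple_pow]
  funext p
  obtain ⟨t, ε⟩ := p
  rw [dem_prod, hprod]
  have hcount := count_ris_alt cs i j (M i j) (cs.simple_mul_simple_pow i j) t (M i j)
  rw [show 2 * M i j = M i j + M i j from by omega, hcount]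
  have h1 : (1 : Function.End (W × ZMod 2)) (t, ε) = (t, ε) := rfl
  rw [h1, Prod.mk.injEq]
  constructor
  · group
  · rw [Nat.cast_add, ← two_mul, show ((2 : ZMod 2)) = 0 from by decide, zero_mul, add_zero]

/-- The parity representation. -/
noncomputable def demRep : W →* Function.End (W × ZMod 2) :=
  cs.lift ⟨dem cs, dem_liftable cs⟩

theorem demRep_wordProd (ω : List B) :
    demRep cs (π ω) = List.prod (ω.map (dem cs)) := by
  induction ω with
  | nil => simp [cs.wordProd_nil]
  | cons i ω ih =>
      rw [cs.wordProd_cons, map_mul, ih, List.map_cons, List.prod_cons, demRep,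
        cs.lift_apply_simple]

theorem count_parity_eq {ω ω' : List B} (h : π ω = π ω') (t : W) :
    (((ris ω).count t : ZMod 2)) = ((ris ω').count t : ZMod 2) := by
  have h1 := dem_prod cs ω t 0
  have h2 := dem_prod cs ω' t 0
  rw [← demRep_wordProd, h] at h1
  rw [← demRep_wordProd] at h2
  rw [h1] at h2
  have := congrArg Prod.snd h2
  simpa using this

theorem count_ris_reflection_odd {t : W} (ht : cs.IsReflection t) {σ : List B}
    (hσ : π σ = t) : (((ris σ).count t : ZMod 2)) = 1 := by
  obtain ⟨u, i, rfl⟩ := ht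
  obtain ⟨υ, rfl⟩ := cs.wordProd_surjective u
  set t : W := π υ * (s i) * (π υ)⁻¹ with hts
  have hσ₀ : π (υ ++ ([i] ++ υ.reverse)) = t := by
    rw [cs.wordProd_append, cs.wordProd_append, cs.wordProd_reverse, cs.wordProd_singleton, hts,
      mul_assoc]
  rw [count_parity_eq cs (hσ.trans hσ₀.symm) t]
  rw [ris_append, ris_append, List.count_append, List.count_append]
  have hq : π ([i] ++ υ.reverse) = (s i) * (π υ)⁻¹ := by
    rw [cs.wordProd_append, cs.wordProd_reverse, cs.wordProd_singleton]
  have hinj : ∀ q : W, Function.Injective (fun x : W => q⁻¹ * x * q) := by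
    intro q a b hab
    simpa using mul_left_cancel (mul_right_cancel hab)
  have c1 : ((ris υ).map
      (fun x => (π ([i] ++ υ.reverse))⁻¹ * x * (π ([i] ++ υ.reverse)))).count t
      = (ris υ).count (s i) := by
    rw [hq]
    have ht2 : t = ((s i) * (π υ)⁻¹)⁻¹ * (s i) * ((s i) * (π υ)⁻¹) := by
      rw [hts, mul_inv_rev, inv_inv, cs.inv_simple]
      simp [mul_assoc, cs.simple_mul_simple_cancel_left]
    rw [ht2]
    exact List.count_map_of_injective _ _ (hinj _) _
  have c2 : ((ris [i]).map
      (fun x => (π υ.reverse)⁻¹ * x * (π υ.reverse))).count t = 1 := by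
    rw [cs.rightInvSeq_singleton, List.map_singleton, cs.wordProd_reverse, inv_inv, ← hts]
    simp
  have c3 : (ris υ.reverse).count t = (ris υ).count (s i) := by
    rw [cs.rightInvSeq_reverse, List.count_reverse, lis_eq_map_ris]
    have hinj2 : Function.Injective (fun x : W => (π υ) * x * (π υ)⁻¹) := by
      intro a b hab
      simpa using mul_left_cancel (mul_right_cancel hab)
    exact List.count_map_of_injective _ _ hinj2 _
  rw [c1, c2, c3]
  push_cast
  rw [show ((ris υ).count (s i) : ZMod 2) + (1 + ((ris υ).count (s i) : ZMod 2))
      = 2 * ((ris υ).count (s i) : ZMod 2) + 1 from by ring,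
    show ((2 : ZMod 2)) = 0 from by decide, zero_mul, zero_add]


theorem mem_ris_of_isRightInversion {ω : List B} {t : W} (ht : cs.IsReflection t)
    (hl : ℓ (π ω * t) < ℓ (π ω)) : t ∈ ris ω := by
  obtain ⟨τ, hτred, hτ⟩ := cs.exists_reduced_word' (π ω * t)
  obtain ⟨σ, hσ⟩ := cs.wordProd_surjective t
  have htt : t * t = 1 := ht.mul_self
  have hprod : π (τ ++ σ) = π ω := by
    rw [cs.wordProd_append, ← hτ, hσ, mul_assoc, htt, mul_one]
  have hpar := count_parity_eq cs hprod t
  rw [ris_append, List.count_append] at hpar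
  have hinj : Function.Injective (fun x : W => (π σ)⁻¹ * x * (π σ)) := by
    intro a b hab
    simpa using mul_left_cancel (mul_right_cancel hab)
  have hcm := List.count_map_of_injective (ris τ) (fun x : W => (π σ)⁻¹ * x * (π σ)) hinj t
  have heq : (π σ)⁻¹ * t * (π σ) = t := by
    rw [hσ, ht.inv, htt, one_mul]
  rw [heq] at hcm
  have hc0 : (ris τ).count t = 0 := by
    rw [List.count_eq_zero]
    intro hmem
    have hinv := cs.isRightInversion_of_mem_rightInvSeq hτred hmem
    rw [← hτ] at hinv
    have : ℓ (π ω * t * t) < ℓ (π ω * t) := hinv.2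
    rw [mul_assoc, htt, mul_one] at this
    omega
  rw [hcm, hc0] at hpar
  have hc1 := count_ris_reflection_odd cs ht hσ
  by_contra hmem
  have hc2 : (ris ω).count t = 0 := List.count_eq_zero.mpr hmem
  rw [hc2, Nat.zero_add] at hpar
  rw [hpar] at hc1
  simp at hc1

theorem strong_exchange_right {ω : List B} {t : W} (ht : cs.IsReflection t)
    (hl : ℓ (π ω * t) < ℓ (π ω)) :
    ∃ j < ω.length, π ω * t = π (ω.eraseIdx j) := by
  have hmem := mem_ris_of_isRightInversion cs ht hl
  obtain ⟨j, hj, hjt⟩ := List.mem_iff_getElem.mp hmem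
  rw [cs.length_rightInvSeq] at hj
  refine ⟨j, hj, ?_⟩
  have hg : (ris ω).getD j 1 = t := by
    rw [List.getD_eq_getElem _ 1 (by simp [hj]), hjt]
  rw [← hg]
  exact cs.wordProd_mul_getD_rightInvSeq ω j


/-! ### Bruhat order basics -/

theorem bruhatLe_of_cov {u v : W} (h : BruhatCov cs u v) : BruhatLe cs u v :=
  Relation.ReflTransGen.single h

theorem bruhatLe_trans {u v w : W} (h1 : BruhatLe cs u v) (h2 : BruhatLe cs v w) :
    BruhatLe cs u w := Relation.ReflTransGen.trans h1 h2

theorem le_length {u v : W} (h : BruhatLe cs u v) : u = v ∨ ℓ u < ℓ v := by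
  induction h with
  | refl => exact Or.inl rfl
  | tail hab hbc ihh =>
      right
      rcases ihh with rfl | hlt
      · rw [hbc.1]; omega
      · rw [hbc.1]; omega

theorem bruhatLt_up_iff (x : W) (i : B) :
    BruhatLt cs x ((s i) * x) ↔ ℓ x < ℓ ((s i) * x) := by
  constructor
  · rintro ⟨hle, hne⟩
    rcases le_length cs hle with he | hlt
    · exact absurd he hne
    · exact hlt
  · intro h
    have hor := cs.length_simple_mul x i
    have hlen : ℓ ((s i) * x) = ℓ x + 1 := by omega
    refine ⟨bruhatLe_of_cov cs ⟨hlen, s i, cs.isReflection_simple i, rfl⟩, ?_⟩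
    intro he
    rw [← he] at hlen
    omega

theorem bruhatLt_down_iff (x : W) (i : B) :
    BruhatLt cs ((s i) * x) x ↔ ℓ ((s i) * x) < ℓ x := by
  constructor
  · rintro ⟨hle, hne⟩
    rcases le_length cs hle with he | hlt
    · exact absurd he hne
    · exact hlt
  · intro h
    have hor := cs.length_simple_mul x i
    have hlen : ℓ x = ℓ ((s i) * x) + 1 := by omega
    have hx : x = (s i) * ((s i) * x) := (cs.simple_mul_simple_cancel_left i).symm
    refine ⟨bruhatLe_of_cov cs ⟨hlen, s i, cs.isReflection_simple i, hx⟩, ?_⟩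
    intro he
    rw [he] at hlen
    omega

theorem phi_up {x : W} {i : B} (h : ℓ x < ℓ ((s i) * x)) : phi cs i x = (s i) * x :=
  if_pos ((bruhatLt_up_iff cs x i).mpr h)

theorem phi_down {x : W} {i : B} (h : ℓ ((s i) * x) < ℓ x) : phi cs i x = x := by
  apply if_neg
  rw [bruhatLt_up_iff]
  omega

theorem psi_down {x : W} {i : B} (h : ℓ ((s i) * x) < ℓ x) : psi cs i x = (s i) * x :=
  if_pos ((bruhatLt_down_iff cs x i).mpr h)

theorem psi_up {x : W} {i : B} (h : ℓ x < ℓ ((s i) * x)) : psi cs i x = x := by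
  apply if_neg
  rw [bruhatLt_down_iff]
  omega

theorem cov_of_right {u t : W} (ht : cs.IsReflection t) (hlen : ℓ (u * t) = ℓ u + 1) :
    BruhatCov cs u (u * t) :=
  ⟨hlen, u * t * u⁻¹, ht.conj u, by group⟩

/-- The key exchange-based dichotomy used in the lifting property. -/
theorem cov_exchange {u w t : W} (ht : cs.IsReflection t) (hw : w = u * t)
    (hlen : ℓ w = ℓ u + 1) (i : B) (hsw : ℓ ((s i) * w) < ℓ w) :
    u = (s i) * w ∨ ℓ ((s i) * u) < ℓ u := by
  obtain ⟨σ, hσlen, hσ⟩ := cs.exists_reduced_word ((s i) * w)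
  have hπ : π (i :: σ) = w := by
    rw [cs.wordProd_cons, ← hσ, cs.simple_mul_simple_cancel_left]
  have hwt : w * t = u := by
    rw [hw, mul_assoc, ht.mul_self, mul_one]
  have hlt : ℓ (π (i :: σ) * t) < ℓ (π (i :: σ)) := by
    rw [hπ, hwt]
    omega
  obtain ⟨j, hj, hje⟩ := strong_exchange_right cs ht hlt
  rw [hπ, hwt] at hje
  match j with
  | 0 =>
      left
      rw [hje, List.eraseIdx_cons_zero, hσ]
  | (k + 1) =>
      right
      rw [List.eraseIdx_cons_succ] at hje
      have hsu : (s i) * u = π (σ.eraseIdx k) := by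
        rw [hje, cs.wordProd_cons, cs.simple_mul_simple_cancel_left]
      have hk : k < σ.length := by
        simp only [List.length_cons] at hj
        omega
      have hlen2 : (σ.eraseIdx k).length = σ.length - 1 := by
        rw [List.length_eraseIdx]
        simp [hk]
      have hle : ℓ ((s i) * u) ≤ σ.length - 1 := by
        rw [hsu, ← hlen2]
        exact cs.length_wordProd_le _
      have hσl := hσlen.eq
      rw [← hσ] at hσl
      simp only [List.length_cons] at hj
      omega

/-- Covers lift along `φ`. -/
theorem cov_phi_le {u w : W} (i : B) (hcov : BruhatCov cs u w) :
    BruhatLe cs (phi cs i u) (phi cs i w) := by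
  obtain ⟨hlen, t', ht', hw'⟩ := hcov
  have ht : cs.IsReflection (u⁻¹ * t' * u) := by
    have := ht'.conj u⁻¹
    simpa using this
  set t : W := u⁻¹ * t' * u with hts
  have hw : w = u * t := by rw [hts, hw']; group
  have hu_or := cs.length_simple_mul u i
  have hw_or := cs.length_simple_mul w i
  rcases hu_or with huu | hud
  · rcases hw_or with hwu | hwd
    · -- both go up
      rw [phi_up cs (by omega), phi_up cs (by omega)]
      have hsw : (s i) * w = ((s i) * u) * t := by rw [hw]; group
      have hcov2 : BruhatCov cs ((s i) * u) ((s i) * u * t) :=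
        cov_of_right cs ht (by rw [← hsw]; omega)
      rw [hsw]
      exact bruhatLe_of_cov cs hcov2
    · -- u up, w down
      rw [phi_up cs (by omega), phi_down cs (by omega)]
      rcases cov_exchange cs ht hw hlen i (by omega) with he | hlt
      · rw [he, cs.simple_mul_simple_cancel_left]
        exact Relation.ReflTransGen.refl
      · omega
  · rcases hw_or with hwu | hwd
    · -- u down, w up
      rw [phi_down cs (by omega), phi_up cs (by omega)]
      have hcovW : BruhatCov cs w ((s i) * w) := ⟨by omega, s i, cs.isReflection_simple i, rfl⟩
      exact (bruhatLe_of_cov cs ⟨hlen, t', ht', hw'⟩).tail hcovW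
    · -- both down
      rw [phi_down cs (by omega), phi_down cs (by omega)]
      exact bruhatLe_of_cov cs ⟨hlen, t', ht', hw'⟩

theorem phi_mono {u w : W} (i : B) (h : BruhatLe cs u w) :
    BruhatLe cs (phi cs i u) (phi cs i w) := by
  induction h with
  | refl => exact Relation.ReflTransGen.refl
  | tail hab hbc ihh => exact bruhatLe_trans cs ihh (cov_phi_le cs i hbc)

/-- Covers lift along `ψ`. -/
theorem cov_psi_le {u w : W} (i : B) (hcov : BruhatCov cs u w) :
    BruhatLe cs (psi cs i u) (psi cs i w) := by
  obtain ⟨hlen, t', ht', hw'⟩ := hcov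
  have ht : cs.IsReflection (u⁻¹ * t' * u) := by
    have := ht'.conj u⁻¹
    simpa using this
  set t : W := u⁻¹ * t' * u with hts
  have hw : w = u * t := by rw [hts, hw']; group
  have hu_or := cs.length_simple_mul u i
  have hw_or := cs.length_simple_mul w i
  rcases hu_or with huu | hud
  · rcases hw_or with hwu | hwd
    · -- both up
      rw [psi_up cs (by omega), psi_up cs (by omega)]
      exact bruhatLe_of_cov cs ⟨hlen, t', ht', hw'⟩
    · -- u up, w down
      rw [psi_up cs (by omega), psi_down cs (by omega)]
      rcases cov_exchange cs ht hw hlen i (by omega) with he | hlt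
      · rw [he]
        exact Relation.ReflTransGen.refl
      · omega
  · rcases hw_or with hwu | hwd
    · -- u down, w up
      rw [psi_down cs (by omega), psi_up cs (by omega)]
      have hx : u = (s i) * ((s i) * u) := (cs.simple_mul_simple_cancel_left i).symm
      have hcovU : BruhatCov cs ((s i) * u) u := ⟨by omega, s i, cs.isReflection_simple i, hx⟩
      exact (bruhatLe_of_cov cs hcovU).tail ⟨hlen, t', ht', hw'⟩
    · -- both down
      rw [psi_down cs (by omega), psi_down cs (by omega)]
      have hsw : (s i) * w = ((s i) * u) * t := by rw [hw]; group
      have hcov2 : BruhatCov cs ((s i) * u) ((s i) * u * t) :=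
        cov_of_right cs ht (by rw [← hsw]; omega)
      rw [hsw]
      exact bruhatLe_of_cov cs hcov2

theorem psi_mono {u w : W} (i : B) (h : BruhatLe cs u w) :
    BruhatLe cs (psi cs i u) (psi cs i w) := by
  induction h with
  | refl => exact Relation.ReflTransGen.refl
  | tail hab hbc ihh => exact bruhatLe_trans cs ihh (cov_psi_le cs i hbc)

theorem le_phi_psi (i : B) (x : W) : BruhatLe cs x (phi cs i (psi cs i x)) := by
  have hor := cs.length_simple_mul x i
  have hne := cs.length_simple_mul_ne x i
  rcases hor with hup | hdn
  · rw [psi_up cs (by omega), phi_up cs (by omega)]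
    exact bruhatLe_of_cov cs ⟨by omega, s i, cs.isReflection_simple i, rfl⟩
  · rw [psi_down cs (by omega)]
    have hx : (s i) * ((s i) * x) = x := cs.simple_mul_simple_cancel_left i
    rw [phi_up cs (by rw [hx]; omega), hx]
    exact Relation.ReflTransGen.refl

theorem psi_phi_le (i : B) (x : W) : BruhatLe cs (psi cs i (phi cs i x)) x := by
  have hor := cs.length_simple_mul x i
  have hne := cs.length_simple_mul_ne x i
  rcases hor with hup | hdn
  · rw [phi_up cs (by omega)]
    have hx : (s i) * ((s i) * x) = x := cs.simple_mul_simple_cancel_left i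
    rw [psi_down cs (by rw [hx]; omega), hx]
    exact Relation.ReflTransGen.refl
  · rw [phi_down cs (by omega), psi_down cs (by omega)]
    have hx : x = (s i) * ((s i) * x) := (cs.simple_mul_simple_cancel_left i).symm
    exact bruhatLe_of_cov cs ⟨by omega, s i, cs.isReflection_simple i, hx⟩


end Dev

theorem stmt7 (cs : CoxeterSystem M W) (i : B) (v w m : W)
    (h₁ : BruhatLe cs m v) (h₂ : BruhatLe cs m w)
    (hmax : ∀ z, BruhatLe cs z v → BruhatLe cs z w → BruhatLe cs z m) :
    BruhatLe cs (phi cs i m) (phi cs i v) ∧ BruhatLe cs (phi cs i m) (phi cs i w) ∧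
      ∀ z, BruhatLe cs z (phi cs i v) → BruhatLe cs z (phi cs i w) →
        BruhatLe cs z (phi cs i m) := by
  refine ⟨phi_mono cs i h₁, phi_mono cs i h₂, ?_⟩
  intro z hzv hzw
  have hzv' : BruhatLe cs (psi cs i z) v :=
    bruhatLe_trans cs (psi_mono cs i hzv) (psi_phi_le cs i v)
  have hzw' : BruhatLe cs (psi cs i z) w :=
    bruhatLe_trans cs (psi_mono cs i hzw) (psi_phi_le cs i w)
  have hm := hmax _ hzv' hzw'
  exact bruhatLe_trans cs (le_phi_psi cs i z) (phi_mono cs i hm)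

end PaperStmt
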